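/- For every x ∈ Δ^p and z ∈ Δ^d, the infimum over α ∈ ℝ^p of ( Σ_{j=1}^p α_j x_j + Σ_{k=1}^d z_k · max_{j=1,…,p} (w^k_j − α_j) ) equals Transport(x, z; w^1, …, w^d), and this infimum is attained. -/

import Mathlib

noncomputable section

namespace Stmt8Aux
variable {p d : ℕ}

def g (hp : 0 < p) (w : Fin d → Fin p → ℝ) (x : Fin p → ℝ) (z : Fin d → ℝ)
    (α : Fin p → ℝ) : ℝ :=
  ∑ j, α j * x j + ∑ k, z k * Finset.univ.sup' ⟨⟨0, hp⟩, Finset.mem_univ _⟩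
    (fun j => w k j - α j)

def obj (w : Fin d → Fin p → ℝ) (β : Fin d → Fin p → ℝ) : ℝ :=
  ∑ k, ∑ j, w k j * β k j

def Feas (p d : ℕ) (x : Fin p → ℝ) (z : Fin d → ℝ) : Set (Fin d → Fin p → ℝ) :=
  {β | (∀ k j, 0 ≤ β k j) ∧ (∀ j, ∑ k, β k j = x j) ∧ (∀ k, ∑ j, β k j = z k)}

theorem weak_duality (hp : 0 < p) (w : Fin d → Fin p → ℝ)
    {x : Fin p → ℝ} {z : Fin d → ℝ} (hz : ∀ k, 0 ≤ z k)
    {β : Fin d → Fin p → ℝ} (hβ : β ∈ Feas p d x z) (α : Fin p → ℝ) :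
    obj w β ≤ g hp w x z α := by
  obtain ⟨h0, hcol, hrow⟩ := hβ
  have ne : (Finset.univ : Finset (Fin p)).Nonempty := ⟨⟨0, hp⟩, Finset.mem_univ _⟩
  calc obj w β = ∑ k, ∑ j, ((w k j - α j) * β k j + α j * β k j) := by
        refine Finset.sum_congr rfl fun k _ => Finset.sum_congr rfl fun j _ => by ring
    _ = ∑ k, ∑ j, (w k j - α j) * β k j + ∑ k, ∑ j, α j * β k j := by
        rw [← Finset.sum_add_distrib]
        exact Finset.sum_congr rfl fun k _ => Finset.sum_add_distrib
    _ ≤ ∑ k, z k * Finset.univ.sup' ne (fun j => w k j - α j)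
          + ∑ j, α j * x j := by
        gcongr with k
        · calc ∑ j, (w k j - α j) * β k j
              ≤ ∑ j, Finset.univ.sup' ne (fun j => w k j - α j) * β k j := by
                refine Finset.sum_le_sum fun j _ => ?_
                exact mul_le_mul_of_nonneg_right (Finset.le_sup' (fun j => w k j - α j) (Finset.mem_univ j)) (h0 k j)
            _ = z k * Finset.univ.sup' ne (fun j => w k j - α j) := by
                rw [← Finset.mul_sum, hrow k, mul_comm]
        · rw [Finset.sum_comm]
          apply le_of_eq
          refine Finset.sum_congr rfl fun j _ => ?_
          rw [← Finset.mul_sum, hcol j]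
    _ = g hp w x z α := by rw [g, add_comm]

theorem primal_max (w : Fin d → Fin p → ℝ)
    {x : Fin p → ℝ} (hx : x ∈ stdSimplex ℝ (Fin p))
    {z : Fin d → ℝ} (hz : z ∈ stdSimplex ℝ (Fin d)) :
    ∃ β ∈ Feas p d x z, ∀ β' ∈ Feas p d x z, obj w β' ≤ obj w β := by
  have hfne : (Feas p d x z).Nonempty := by
    refine ⟨fun k j => x j * z k, fun k j => mul_nonneg (hx.1 j) (hz.1 k), fun j => ?_, fun k => ?_⟩
    · rw [← Finset.mul_sum, hz.2, mul_one]
    · rw [show (∑ j, x j * z k) = (∑ j, x j) * z k by rw [Finset.sum_mul], hx.2, one_mul]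
  have hsub : Feas p d x z ⊆ Set.Icc (0 : Fin d → Fin p → ℝ) 1 := by
    rintro β ⟨h0, hcol, hrow⟩
    constructor
    · intro k; intro j; exact h0 k j
    · intro k; intro j
      calc β k j ≤ ∑ j', β k j' :=
            Finset.single_le_sum (fun j' _ => h0 k j') (Finset.mem_univ j)
        _ = z k := hrow k
        _ ≤ ∑ k', z k' := Finset.single_le_sum (fun k' _ => hz.1 k') (Finset.mem_univ k)
        _ = 1 := hz.2
  have hclosed : IsClosed (Feas p d x z) := by
    have h1 : IsClosed {β : Fin d → Fin p → ℝ | ∀ k j, 0 ≤ β k j} := by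
      have : {β : Fin d → Fin p → ℝ | ∀ k j, 0 ≤ β k j}
          = ⋂ k, ⋂ j, {β : Fin d → Fin p → ℝ | 0 ≤ β k j} := by
        ext β; simp [Set.mem_iInter]
      rw [this]
      refine isClosed_iInter fun k => isClosed_iInter fun j => ?_
      exact isClosed_le continuous_const ((continuous_apply j).comp (continuous_apply k))
    have h2 : IsClosed {β : Fin d → Fin p → ℝ | ∀ j, ∑ k, β k j = x j} := by
      have : {β : Fin d → Fin p → ℝ | ∀ j, ∑ k, β k j = x j}
          = ⋂ j, {β : Fin d → Fin p → ℝ | ∑ k, β k j = x j} := by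
        ext β; simp [Set.mem_iInter]
      rw [this]
      refine isClosed_iInter fun j => isClosed_eq ?_ continuous_const
      exact continuous_finset_sum _ fun k _ => (continuous_apply j).comp (continuous_apply k)
    have h3 : IsClosed {β : Fin d → Fin p → ℝ | ∀ k, ∑ j, β k j = z k} := by
      have : {β : Fin d → Fin p → ℝ | ∀ k, ∑ j, β k j = z k}
          = ⋂ k, {β : Fin d → Fin p → ℝ | ∑ j, β k j = z k} := by
        ext β; simp [Set.mem_iInter]
      rw [this]
      refine isClosed_iInter fun k => isClosed_eq ?_ continuous_const
      exact continuous_finset_sum _ fun j _ => (continuous_apply j).comp (continuous_apply k)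
    exact (h1.inter (h2.inter h3))
  have hcomp : IsCompact (Feas p d x z) :=
    (isCompact_Icc).of_isClosed_subset hclosed hsub
  have hcont : Continuous (obj w) := by
    refine continuous_finset_sum _ fun k _ => continuous_finset_sum _ fun j _ => ?_
    exact continuous_const.mul ((continuous_apply j).comp (continuous_apply k))
  obtain ⟨β, hβ, hmax⟩ := hcomp.exists_isMaxOn hfne hcont.continuousOn
  exact ⟨β, hβ, fun β' hβ' => hmax hβ'⟩

theorem dual_min (hp : 0 < p) (hd : 0 < d) (w : Fin d → Fin p → ℝ)
    {x : Fin p → ℝ} (hx : x ∈ stdSimplex ℝ (Fin p))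
    {z : Fin d → ℝ} (hz : z ∈ stdSimplex ℝ (Fin d)) :
    ∃ astar : Fin p → ℝ, ∀ α, g hp w x z astar ≤ g hp w x z α := by
  have ne : (Finset.univ : Finset (Fin p)).Nonempty := ⟨⟨0, hp⟩, Finset.mem_univ _⟩
  have ned : (Finset.univ : Finset (Fin d)).Nonempty := ⟨⟨0, hd⟩, Finset.mem_univ _⟩
  set W : ℝ := Finset.univ.sup' ned (fun k => Finset.univ.sup' ne (fun j => |w k j|)) with hW
  have hWb : ∀ k j, |w k j| ≤ W := by
    intro k j
    calc |w k j| ≤ Finset.univ.sup' ne (fun j => |w k j|) :=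
          Finset.le_sup' (fun j => |w k j|) (Finset.mem_univ j)
      _ ≤ W := Finset.le_sup' (fun k => Finset.univ.sup' ne (fun j => |w k j|)) (Finset.mem_univ k)
  have hW0 : 0 ≤ W := le_trans (abs_nonneg _) (hWb ⟨0, hd⟩ ⟨0, hp⟩)
  -- clamp lemma
  have clamp : ∀ α : Fin p → ℝ, ∃ α' ∈ Set.Icc (0 : Fin p → ℝ) (fun _ => 2 * W),
      g hp w x z α' ≤ g hp w x z α := by
    intro α
    set m : ℝ := Finset.univ.inf' ne α with hm
    obtain ⟨jm, _, hjm⟩ := Finset.exists_mem_eq_inf' ne α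
    have hmle : ∀ j, m ≤ α j := fun j => Finset.inf'_le α (Finset.mem_univ j)
    set α'' : Fin p → ℝ := fun j => α j - m with hα''
    have hshift : g hp w x z α'' = g hp w x z α := by
      have e1 : ∑ j, α'' j * x j = (∑ j, α j * x j) - m := by
        rw [show (∑ j, α'' j * x j) = ∑ j, (α j * x j - m * x j) from
            Finset.sum_congr rfl fun j _ => by simp only [hα'']; ring]
        rw [Finset.sum_sub_distrib, ← Finset.mul_sum, hx.2, mul_one]
      have h1 : ∀ k, Finset.univ.sup' ne (fun j => w k j - α'' j)
          = Finset.univ.sup' ne (fun j => w k j - α j) + m := by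
        intro k
        rw [Finset.sup'_add]
        exact Finset.sup'_congr ne rfl fun j _ => by simp only [hα'']; ring
      have e2 : (∑ k, z k * Finset.univ.sup' ne (fun j => w k j - α'' j))
          = (∑ k, z k * Finset.univ.sup' ne (fun j => w k j - α j)) + m := by
        rw [show (∑ k, z k * Finset.univ.sup' ne (fun j => w k j - α'' j))
            = ∑ k, (z k * Finset.univ.sup' ne (fun j => w k j - α j) + z k * m) from
          Finset.sum_congr rfl fun k _ => by rw [h1 k]; ring]
        rw [Finset.sum_add_distrib, ← Finset.sum_mul, hz.2, one_mul]
      unfold g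
      rw [e1, e2]
      ring
    set α' : Fin p → ℝ := fun j => min (α'' j) (2 * W) with hα'
    have h''0 : ∀ j, 0 ≤ α'' j := fun j => by simp [hα'']; exact hmle j
    refine ⟨α', ⟨fun j => le_min (h''0 j) (by positivity), fun j => min_le_right _ _⟩, ?_⟩
    rw [← hshift]
    unfold g
    have hsupeq : ∀ k, Finset.univ.sup' ne (fun j => w k j - α' j)
        = Finset.univ.sup' ne (fun j => w k j - α'' j) := by
      intro k
      apply le_antisymm
      · apply Finset.sup'_le
        intro j _
        by_cases hj : α'' j ≤ 2 * W
        · have : α' j = α'' j := min_eq_left hj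
          rw [this]
          exact Finset.le_sup' (fun j => w k j - α'' j) (Finset.mem_univ j)
        · have : α' j = 2 * W := min_eq_right (le_of_not_ge hj)
          rw [this]
          have h1 : w k j - 2 * W ≤ -W := by
            have := (abs_le.mp (hWb k j)).2; linarith
          have h2 : -W ≤ w k jm - α'' jm := by
            have h3 : α'' jm = 0 := by simp only [hα'']; rw [hm, hjm]; ring
            have := (abs_le.mp (hWb k jm)).1; rw [h3]; linarith
          exact le_trans (le_trans h1 h2)
            (Finset.le_sup' (fun j => w k j - α'' j) (Finset.mem_univ jm))
      · apply Finset.sup'_le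
        intro j _
        have : α' j ≤ α'' j := min_le_left _ _
        exact le_trans (by linarith) (Finset.le_sup' (fun j => w k j - α' j) (Finset.mem_univ j))
    have hsum1 : ∑ j, α' j * x j ≤ ∑ j, α'' j * x j :=
      Finset.sum_le_sum fun j _ => mul_le_mul_of_nonneg_right (min_le_left _ _) (hx.1 j)
    have hsum2 : (∑ k, z k * Finset.univ.sup' ne (fun j => w k j - α' j))
        = ∑ k, z k * Finset.univ.sup' ne (fun j => w k j - α'' j) :=
      Finset.sum_congr rfl fun k _ => by rw [hsupeq k]
    linarith
  -- compactness
  have hcont : Continuous (g hp w x z) := by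
    unfold g
    refine Continuous.add ?_ ?_
    · exact continuous_finset_sum _ fun j _ => (continuous_apply j).mul continuous_const
    · refine continuous_finset_sum _ fun k _ => continuous_const.mul ?_
      exact Continuous.finset_sup'_apply ne fun j _ => continuous_const.sub (continuous_apply j)
  have hbox : IsCompact (Set.Icc (0 : Fin p → ℝ) (fun _ => 2 * W)) := isCompact_Icc
  have hboxne : (Set.Icc (0 : Fin p → ℝ) (fun _ => 2 * W)).Nonempty :=
    ⟨0, le_refl _, fun j => by positivity⟩
  obtain ⟨astar, hastarmem, hastarmin⟩ := hbox.exists_isMinOn hboxne hcont.continuousOn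
  refine ⟨astar, fun α => ?_⟩
  obtain ⟨α', hα'mem, hα'le⟩ := clamp α
  exact le_trans (hastarmin hα'mem) hα'le

theorem strong_duality (hp : 0 < p) (hd : 0 < d) (w : Fin d → Fin p → ℝ)
    {x : Fin p → ℝ} (hx : x ∈ stdSimplex ℝ (Fin p))
    {z : Fin d → ℝ} (hz : z ∈ stdSimplex ℝ (Fin d))
    {astar : Fin p → ℝ} (hmin : ∀ α, g hp w x z astar ≤ g hp w x z α) :
    ∃ β ∈ Feas p d x z, obj w β = g hp w x z astar := by
  have ne : (Finset.univ : Finset (Fin p)).Nonempty := ⟨⟨0, hp⟩, Finset.mem_univ _⟩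
  haveI : Nonempty (Fin p) := ⟨⟨0, hp⟩⟩
  set M : Fin d → ℝ := fun k => Finset.univ.sup' ne (fun j => w k j - astar j) with hM
  set A : Fin d → Finset (Fin p) :=
    fun k => Finset.univ.filter (fun j => w k j - astar j = M k) with hA
  have hAne : ∀ k, (A k).Nonempty := by
    intro k
    obtain ⟨j, _, hj⟩ := Finset.exists_mem_eq_sup' ne (fun j => w k j - astar j)
    exact ⟨j, Finset.mem_filter.mpr ⟨Finset.mem_univ _, hj.symm⟩⟩
  have hAval : ∀ k, ∀ j ∈ A k, w k j - astar j = M k := by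
    intro k j hj; exact (Finset.mem_filter.mp hj).2
  have hAub : ∀ k j, w k j - astar j ≤ M k :=
    fun k j => Finset.le_sup' (fun j => w k j - astar j) (Finset.mem_univ j)
  set Active : Finset (Fin d → Fin p) :=
    Finset.univ.filter (fun σ => ∀ k, σ k ∈ A k) with hActive
  set grad : (Fin d → Fin p) → Fin p → ℝ :=
    fun σ j => x j - ∑ k, (if σ k = j then z k else 0) with hgrad
  -- generic swap identity
  have idsum : ∀ (σ : Fin d → Fin p) (v : Fin p → ℝ),
      (∑ j, (∑ k, if σ k = j then z k else 0) * v j) = ∑ k, z k * v (σ k) := by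
    intro σ v
    rw [show (∑ j, (∑ k, if σ k = j then z k else 0) * v j)
        = ∑ j, ∑ k, (if σ k = j then z k * v j else 0) from
      Finset.sum_congr rfl fun j _ => by
        rw [Finset.sum_mul]
        exact Finset.sum_congr rfl fun k _ => by split_ifs <;> simp]
    rw [Finset.sum_comm]
    refine Finset.sum_congr rfl fun k _ => ?_
    rw [Finset.sum_ite_eq Finset.univ (σ k) (fun j => z k * v j), if_pos (Finset.mem_univ _)]
  have gradv : ∀ (σ : Fin d → Fin p) (v : Fin p → ℝ),
      (∑ j, grad σ j * v j) = (∑ j, x j * v j) - ∑ k, z k * v (σ k) := by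
    intro σ v
    rw [← idsum σ v, ← Finset.sum_sub_distrib]
    exact Finset.sum_congr rfl fun j _ => by simp only [hgrad]; ring
  -- Step 1: 0 is in the convex hull of active gradients
  have h0conv : (0 : Fin p → ℝ) ∈ convexHull ℝ (grad '' (Active : Set (Fin d → Fin p))) := by
    by_contra hnot
    have hcl : IsClosed (convexHull ℝ (grad '' (Active : Set (Fin d → Fin p)))) :=
      ((Active.finite_toSet.image grad).isCompact_convexHull (𝕜 := ℝ)).isClosed
    obtain ⟨f, u, hfu, hall⟩ :=
      geometric_hahn_banach_point_closed (convex_convexHull ℝ _) hcl hnot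
    have hu0 : 0 < u := by simpa using hfu
    set v : Fin p → ℝ := fun j => f (fun j' => if j = j' then 1 else 0) with hv
    have hfv : ∀ a : Fin p → ℝ, f a = ∑ j, a j * v j := by
      intro a
      have := LinearMap.pi_apply_eq_sum_univ (f : (Fin p → ℝ) →ₗ[ℝ] ℝ) a
      simpa [smul_eq_mul, hv] using this
    have hgradlt : ∀ σ ∈ Active, u < ∑ j, grad σ j * v j := by
      intro σ hσ
      rw [← hfv]
      exact hall _ (subset_convexHull ℝ _ ⟨σ, hσ, rfl⟩)
    -- pick per-k maximizer of v on A k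
    have hex : ∀ k, ∃ j, j ∈ A k ∧ ∀ j' ∈ A k, v j' ≤ v j := by
      intro k
      obtain ⟨j, hj, hje⟩ := Finset.exists_mem_eq_sup' (hAne k) v
      exact ⟨j, hj, fun j' hj' => hje ▸ Finset.le_sup' v hj'⟩
    choose jk hjkA hjkmax using hex
    have hσhat : jk ∈ Active := Finset.mem_filter.mpr ⟨Finset.mem_univ _, hjkA⟩
    set V : ℝ := Finset.univ.sup' ne (fun j => |v j|) with hV
    have hVb : ∀ j, |v j| ≤ V := fun j => Finset.le_sup' (fun j => |v j|) (Finset.mem_univ j)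
    have hV0 : 0 ≤ V := le_trans (abs_nonneg _) (hVb ⟨0, hp⟩)
    set Q : Finset (Fin d × Fin p) := Finset.univ.filter (fun q => q.2 ∉ A q.1) with hQdef
    set gap : Fin d × Fin p → ℝ := fun q => M q.1 - (w q.1 q.2 - astar q.2) with hgap
    have hgappos : ∀ q ∈ Q, 0 < gap q := by
      intro q hq
      have hne' := (Finset.mem_filter.mp hq).2
      have h1 : w q.1 q.2 - astar q.2 ≠ M q.1 := by
        intro h; exact hne' (Finset.mem_filter.mpr ⟨Finset.mem_univ _, h⟩)
      have h2 := hAub q.1 q.2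
      simp only [hgap]
      cases lt_or_eq_of_le h2 with
      | inl h => linarith
      | inr h => exact absurd h h1
    set δ : ℝ := if hQ : Q.Nonempty then Q.inf' hQ gap else 1 with hδ
    have hδpos : 0 < δ := by
      rw [hδ]
      split_ifs with hQ
      · exact (Finset.lt_inf'_iff hQ).mpr (fun q hq => hgappos q hq)
      · exact one_pos
    have hδle : ∀ q ∈ Q, δ ≤ gap q := by
      intro q hq
      rw [hδ, dif_pos ⟨q, hq⟩]
      exact Finset.inf'_le gap hq
    set t : ℝ := δ / (2 * V + 1) with ht
    have ht0 : 0 < t := by rw [ht]; positivity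
    have htb : t * (2 * V) < δ := by
      have h1 : t * (2 * V + 1) = δ := div_mul_cancel₀ _ (by positivity)
      nlinarith
    set αt : Fin p → ℝ := fun j => astar j - t * v j with hαt
    have hsupt : ∀ k, Finset.univ.sup' ne (fun j => w k j - αt j) = M k + t * v (jk k) := by
      intro k
      apply le_antisymm
      · apply Finset.sup'_le
        intro j _
        show w k j - (astar j - t * v j) ≤ M k + t * v (jk k)
        by_cases hj : j ∈ A k
        · have h1 := hAval k j hj
          have h2 := mul_le_mul_of_nonneg_left (hjkmax k j hj) ht0.le
          linarith
        · have hq : (k, j) ∈ Q := Finset.mem_filter.mpr ⟨Finset.mem_univ _, hj⟩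
          have hgapk := hδle _ hq
          have e1 : t * (v j - v (jk k)) ≤ t * (2 * V) := by
            refine mul_le_mul_of_nonneg_left ?_ ht0.le
            have := (abs_le.mp (hVb j)).2
            have := (abs_le.mp (hVb (jk k))).1
            linarith
          simp only [hgap] at hgapk
          linarith
      · have heq : w k (jk k) - αt (jk k) = M k + t * v (jk k) := by
          have := hAval k (jk k) (hjkA k)
          simp only [hαt]
          linarith
        rw [← heq]
        exact Finset.le_sup' (fun j => w k j - αt j) (Finset.mem_univ _)
    have eA : (∑ j, αt j * x j) = (∑ j, astar j * x j) - t * ∑ j, x j * v j := by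
      rw [Finset.mul_sum, ← Finset.sum_sub_distrib]
      exact Finset.sum_congr rfl fun j _ => by simp only [hαt]; ring
    have eB : (∑ k, z k * Finset.univ.sup' ne (fun j => w k j - αt j))
        = (∑ k, z k * M k) + t * ∑ k, z k * v (jk k) := by
      rw [Finset.mul_sum, ← Finset.sum_add_distrib]
      refine Finset.sum_congr rfl fun k _ => ?_
      rw [hsupt k]
      ring
    have hgeval : g hp w x z αt = g hp w x z astar - t * (∑ j, grad jk j * v j) := by
      unfold g
      rw [eA, eB, gradv jk v]
      ring
    have hlt : g hp w x z αt < g hp w x z astar := by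
      rw [hgeval]
      have h1 := mul_lt_mul_of_pos_left (hgradlt jk hσhat) ht0
      nlinarith
    exact absurd (hmin αt) (not_le.mpr hlt)
  -- Step 2: extract convex combination and build primal solution
  rw [convexHull_eq] at h0conv
  obtain ⟨ι, tset, c, y, hc0, hc1, hymem, hcm⟩ := h0conv
  have hcm' : ∑ i ∈ tset, c i • y i = 0 := by
    rw [← Finset.centerMass_eq_of_sum_1 _ y hc1]; exact hcm
  have hchoose : ∀ i ∈ tset, ∃ σ, σ ∈ Active ∧ grad σ = y i := by
    intro i hi
    obtain ⟨σ, h1, h2⟩ := hymem i hi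
    exact ⟨σ, h1, h2⟩
  choose! σf hσfA hσfg using hchoose
  have hσfk : ∀ i ∈ tset, ∀ k, σf i k ∈ A k :=
    fun i hi k => (Finset.mem_filter.mp (hσfA i hi)).2 k
  set β : Fin d → Fin p → ℝ :=
    fun k j => ∑ i ∈ tset, c i * (if σf i k = j then z k else 0) with hβ
  have hcmj : ∀ j, (∑ i ∈ tset, c i * y i j) = 0 := by
    intro j
    have := congrFun hcm' j
    simpa [Finset.sum_apply] using this
  have hgradsum : ∀ i ∈ tset, ∀ j, (∑ k, if σf i k = j then z k else 0) = x j - y i j := by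
    intro i hi j
    have := congrFun (hσfg i hi) j
    simp only [hgrad] at this
    linarith
  have hfeas : β ∈ Feas p d x z := by
    refine ⟨fun k j => ?_, fun j => ?_, fun k => ?_⟩
    · refine Finset.sum_nonneg fun i hi => mul_nonneg (hc0 i hi) ?_
      split_ifs
      · exact hz.1 k
      · exact le_refl 0
    · -- column sums
      rw [Finset.sum_comm]
      calc (∑ i ∈ tset, ∑ k, c i * (if σf i k = j then z k else 0))
          = ∑ i ∈ tset, c i * (x j - y i j) := by
            refine Finset.sum_congr rfl fun i hi => ?_
            rw [← Finset.mul_sum, hgradsum i hi j]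
        _ = (∑ i ∈ tset, c i) * x j - ∑ i ∈ tset, c i * y i j := by
            rw [Finset.sum_mul, ← Finset.sum_sub_distrib]
            exact Finset.sum_congr rfl fun i _ => by ring
        _ = x j := by rw [hc1, hcmj j]; ring
    · -- row sums
      rw [Finset.sum_comm]
      calc (∑ i ∈ tset, ∑ j, c i * (if σf i k = j then z k else 0))
          = ∑ i ∈ tset, c i * z k := by
            refine Finset.sum_congr rfl fun i hi => ?_
            rw [← Finset.mul_sum,
              Finset.sum_ite_eq Finset.univ (σf i k) (fun _ => z k), if_pos (Finset.mem_univ _)]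
        _ = z k := by rw [← Finset.sum_mul, hc1, one_mul]
  refine ⟨β, hfeas, ?_⟩
  -- objective value
  have hk : ∀ k, (∑ j, w k j * β k j) = ∑ i ∈ tset, c i * (z k * w k (σf i k)) := by
    intro k
    calc (∑ j, w k j * β k j)
        = ∑ j, ∑ i ∈ tset, (c i * if σf i k = j then w k j * z k else 0) := by
          refine Finset.sum_congr rfl fun j _ => ?_
          rw [hβ, Finset.mul_sum]
          exact Finset.sum_congr rfl fun i _ => by split_ifs <;> ring
      _ = ∑ i ∈ tset, ∑ j, (c i * if σf i k = j then w k j * z k else 0) := Finset.sum_comm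
      _ = ∑ i ∈ tset, c i * (z k * w k (σf i k)) := by
          refine Finset.sum_congr rfl fun i _ => ?_
          rw [← Finset.mul_sum,
            Finset.sum_ite_eq Finset.univ (σf i k) (fun j => w k j * z k),
            if_pos (Finset.mem_univ _)]
          ring
  have hobj : obj w β = ∑ i ∈ tset, c i * (∑ k, z k * w k (σf i k)) := by
    unfold obj
    rw [Finset.sum_congr rfl fun k _ => hk k, Finset.sum_comm]
    exact Finset.sum_congr rfl fun i _ => by rw [Finset.mul_sum]
  have hval : ∀ i ∈ tset, (∑ k, z k * w k (σf i k))
      = (∑ k, z k * M k) + (∑ j, astar j * x j) - ∑ j, astar j * y i j := by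
    intro i hi
    have e1 : (∑ k, z k * w k (σf i k)) = (∑ k, z k * M k) + ∑ k, z k * astar (σf i k) := by
      rw [← Finset.sum_add_distrib]
      refine Finset.sum_congr rfl fun k _ => ?_
      have h := hAval k (σf i k) (hσfk i hi k)
      have hw : w k (σf i k) = M k + astar (σf i k) := by linarith
      rw [hw]; ring
    have e2 : (∑ k, z k * astar (σf i k)) = ∑ j, (x j - y i j) * astar j := by
      rw [← idsum (σf i) astar]
      exact Finset.sum_congr rfl fun j _ => by rw [hgradsum i hi j]
    have e3 : (∑ j, (x j - y i j) * astar j)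
        = (∑ j, astar j * x j) - ∑ j, astar j * y i j := by
      rw [← Finset.sum_sub_distrib]
      exact Finset.sum_congr rfl fun j _ => by ring
    rw [e1, e2, e3]
    ring
  have hzero : (∑ i ∈ tset, c i * ∑ j, astar j * y i j) = 0 := by
    calc (∑ i ∈ tset, c i * ∑ j, astar j * y i j)
        = ∑ i ∈ tset, ∑ j, astar j * (c i * y i j) := by
          refine Finset.sum_congr rfl fun i _ => ?_
          rw [Finset.mul_sum]
          exact Finset.sum_congr rfl fun j _ => by ring
      _ = ∑ j, astar j * (∑ i ∈ tset, c i * y i j) := by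
          rw [Finset.sum_comm]
          exact Finset.sum_congr rfl fun j _ => by rw [Finset.mul_sum]
      _ = 0 := by
          rw [Finset.sum_congr rfl fun j _ => by rw [hcmj j]]
          simp
  calc obj w β = ∑ i ∈ tset, c i * (∑ k, z k * w k (σf i k)) := hobj
    _ = ∑ i ∈ tset, (c i * ((∑ k, z k * M k) + (∑ j, astar j * x j))
          - c i * ∑ j, astar j * y i j) := by
        refine Finset.sum_congr rfl fun i hi => ?_
        rw [hval i hi]; ring
    _ = (∑ i ∈ tset, c i) * ((∑ k, z k * M k) + (∑ j, astar j * x j))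
          - ∑ i ∈ tset, c i * ∑ j, astar j * y i j := by
        rw [Finset.sum_sub_distrib, Finset.sum_mul]
    _ = g hp w x z astar := by
        rw [hc1, hzero, hM]
        unfold g
        ring

end Stmt8Aux

/-- The feasible objective values of the max-weight transportation problem:
`Transport(x, z; w¹, …, w^d)` is the greatest element of this set. -/
def transportSet (p d : ℕ) (w : Fin d → Fin p → ℝ) (x : Fin p → ℝ) (z : Fin d → ℝ) :
    Set ℝ :=
  {s | ∃ β : Fin d → Fin p → ℝ, (∀ k j, 0 ≤ β k j)
    ∧ (∀ j, ∑ k, β k j = x j) ∧ (∀ k, ∑ j, β k j = z k)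
    ∧ s = ∑ k, ∑ j, w k j * β k j}

/-- The attained infimum over `α` of `Σ_j α_j x_j + Σ_k z_k · max_j (w^k_j − α_j)` equals
the max-weight transportation value `Transport(x, z; w¹, …, w^d)`. -/
theorem stmt8 {p d : ℕ} (hp : 0 < p) (hd : 0 < d)
    (w : Fin d → Fin p → ℝ)
    (x : Fin p → ℝ) (hx : x ∈ stdSimplex ℝ (Fin p))
    (z : Fin d → ℝ) (hz : z ∈ stdSimplex ℝ (Fin d)) :
    ∃ T : ℝ,
      IsGreatest (transportSet p d w x z) T
      ∧ IsLeast
          {v : ℝ | ∃ α : Fin p → ℝ,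
            v = ∑ j, α j * x j
              + ∑ k, z k * Finset.univ.sup' ⟨⟨0, hp⟩, Finset.mem_univ _⟩
                  (fun j => w k j - α j)} T := by
  classical
  obtain ⟨βstar, hβstar, hβmax⟩ := Stmt8Aux.primal_max w hx hz
  obtain ⟨astar, hastar⟩ := Stmt8Aux.dual_min hp hd w hx hz
  obtain ⟨β0, hβ0feas, hβ0obj⟩ := Stmt8Aux.strong_duality hp hd w hx hz hastar
  have hmemiff : ∀ s, s ∈ transportSet p d w x z ↔
      ∃ β ∈ Stmt8Aux.Feas p d x z, s = Stmt8Aux.obj w β := by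
    intro s
    constructor
    · rintro ⟨β, h1, h2, h3, h4⟩; exact ⟨β, ⟨h1, h2, h3⟩, h4⟩
    · rintro ⟨β, ⟨h1, h2, h3⟩, h4⟩; exact ⟨β, h1, h2, h3, h4⟩
  set T : ℝ := Stmt8Aux.obj w βstar with hT
  have hTg : T = Stmt8Aux.g hp w x z astar := by
    apply le_antisymm
    · exact Stmt8Aux.weak_duality hp w (fun k => hz.1 k) hβstar astar
    · rw [← hβ0obj]
      exact hβmax β0 hβ0feas
  refine ⟨T, ⟨?_, ?_⟩, ?_, ?_⟩
  · exact (hmemiff T).mpr ⟨βstar, hβstar, rfl⟩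
  · intro s hs
    obtain ⟨β, hf, rfl⟩ := (hmemiff s).mp hs
    exact hβmax β hf
  · exact ⟨astar, by rw [hTg, Stmt8Aux.g]⟩
  · rintro v ⟨α, rfl⟩
    exact Stmt8Aux.weak_duality hp w (fun k => hz.1 k) hβstar α
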